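/- Let F = A[T₁,…,T_r] be a polynomial ring and let V ⊂ F be the A-submodule spanned by monomials whose degree in each individual variable is less than n. Then the ideal of norms I_V ⊆ Γⁿ_A(F) equals the ideal of norms I_F associated to all of F. -/

import Mathlib

/-- `δ(x,y) ∈ Γⁿ_A(F)`, where `p1` records the external product `γ¹(z 1) * ⋯ * γ¹(z n)`. -/
noncomputable def extDelta {A F Γn : Type*} [CommRing A] [CommRing F] [Algebra A F]
    [CommRing Γn] [Algebra A Γn] {n : ℕ}
    (p1 : MultilinearMap A (fun _ : Fin n => F) Γn) (x y : Fin n → F) : Γn :=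
  ∑ σ : Equiv.Perm (Fin n),
    ((Equiv.Perm.sign σ : ℤ)) • p1 (fun i => x i * y (σ i))

/-- The ideal of norms `I_V ⊆ Γⁿ_A(F)` associated to an `A`-submodule `V ⊆ F`. -/
noncomputable def normIdeal {A F Γn : Type*} [CommRing A] [CommRing F] [Algebra A F]
    [CommRing Γn] [Algebra A Γn] {n : ℕ}
    (p1 : MultilinearMap A (fun _ : Fin n => F) Γn) (V : Submodule A F) : Ideal Γn :=
  Ideal.span {t | ∃ x y : Fin n → F,
    (∀ i, x i ∈ V) ∧ (∀ i, y i ∈ V) ∧ t = extDelta p1 x y}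

namespace NormAux

open Finset

variable {A F Γn : Type*} [CommRing A] [CommRing F] [Algebra A F]
    [CommRing Γn] [Algebra A Γn] {n : ℕ}
variable (p1 : MultilinearMap A (fun _ : Fin n => F) Γn)

lemma update_mul [DecidableEq (Fin n)] (x : Fin n → F) (j : Fin n) (g : F) (z : Fin n → F) :
    (fun i => Function.update x j g i * z i)
      = Function.update (fun i => x i * z i) j (g * z j) := by
  funext i
  rcases eq_or_ne i j with rfl | h
  · simp
  · simp [Function.update_of_ne h]

lemma extDelta_def (x y : Fin n → F) :
    extDelta p1 x y
      = ∑ σ : Equiv.Perm (Fin n), ((Equiv.Perm.sign σ : ℤ)) • p1 (fun i => x i * y (σ i)) :=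
  rfl

lemma extDelta_comm (hsym : ∀ (σ : Equiv.Perm (Fin n)) (z : Fin n → F), p1 (z ∘ σ) = p1 z)
    (x y : Fin n → F) : extDelta p1 x y = extDelta p1 y x := by
  rw [extDelta_def, extDelta_def]
  refine Fintype.sum_equiv (Equiv.inv (Equiv.Perm (Fin n))) _ _ fun σ => ?_
  have h1 : (fun i => y i * x (σ⁻¹ i)) ∘ σ = fun i => x i * y (σ i) := by
    funext i
    simp [mul_comm]
  rw [Equiv.inv_apply, ← hsym σ (fun i => y i * x (σ⁻¹ i)), h1, Equiv.Perm.sign_inv]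

variable (q : ℕ → F → Γn)

lemma key2
    (hq : ∀ (c : ℕ), c ≤ n → ∀ (f : F) (w : Fin n → F),
      q c f * p1 w = ∑ S ∈ Finset.univ.powersetCard c,
        p1 fun i => (if i ∈ S then f else 1) * w i)
    (j : Fin n) (f b : F) (w : Fin n → F) :
    p1 (Function.update w j (f ^ n * b))
      = - ∑ c ∈ Finset.Icc 1 n, (-1 : ℤ) ^ c •
          (q c f * p1 (Function.update w j (f ^ (n - c) * b))) := by
  classical
  set G : Finset (Fin n) → Γn := fun S =>
    (-1 : ℤ) ^ S.card •
      p1 (fun i => (if i ∈ S then f else 1) * Function.update w j (f ^ (n - S.card) * b) i)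
    with hG
  have hn1 : 1 ≤ n := Nat.one_le_iff_ne_zero.mpr (fun h => (h ▸ j).elim0)
  have hzero : ∑ S ∈ (univ : Finset (Fin n)).powerset, G S = 0 := by
    have hju : (univ : Finset (Fin n)) = insert j (univ.erase j) :=
      (Finset.insert_erase (mem_univ j)).symm
    rw [hju, Finset.sum_powerset_insert (notMem_erase j univ), ← Finset.sum_add_distrib]
    refine Finset.sum_eq_zero fun t ht => ?_
    have hjt : j ∉ t := fun h => (notMem_erase j univ) (Finset.mem_powerset.mp ht h)
    have hcard : t.card + 1 ≤ n := by
      have h1 := Finset.card_le_card (Finset.mem_powerset.mp ht)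
      have h2 : (univ.erase j).card = n - 1 := by
        rw [Finset.card_erase_of_mem (mem_univ j), Finset.card_univ, Fintype.card_fin]
      omega
    have hins : G (insert j t) = - G t := by
      have harg : (fun i => (if i ∈ insert j t then f else 1) *
            Function.update w j (f ^ (n - (t.card + 1)) * b) i)
          = fun i => (if i ∈ t then f else 1) *
            Function.update w j (f ^ (n - t.card) * b) i := by
        funext i
        rcases eq_or_ne i j with rfl | h
        · rw [if_pos (Finset.mem_insert_self i t), if_neg hjt,
            Function.update_self, Function.update_self, one_mul, ← mul_assoc,
            ← pow_succ']
          congr 2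
          omega
        · rw [Function.update_of_ne h, Function.update_of_ne h]
          congr 1
          simp [Finset.mem_insert, h]
      rw [hG]
      simp only
      rw [Finset.card_insert_of_notMem hjt, harg, pow_succ, mul_neg_one, neg_smul]
    rw [hins, add_neg_cancel]
  have hsplit : ∑ S ∈ (univ : Finset (Fin n)).powerset, G S
      = p1 (Function.update w j (f ^ n * b)) + ∑ c ∈ Finset.Icc 1 n, (-1 : ℤ) ^ c •
          (q c f * p1 (Function.update w j (f ^ (n - c) * b))) := by
    rw [Finset.sum_powerset]
    have hcard : (univ : Finset (Fin n)).card = n := by simp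
    have hinner : ∀ c ∈ Finset.range ((univ : Finset (Fin n)).card + 1),
        (∑ S ∈ Finset.powersetCard c (univ : Finset (Fin n)), G S)
          = (-1 : ℤ) ^ c • (q c f * p1 (Function.update w j (f ^ (n - c) * b))) := by
      intro c hc
      have hcn : c ≤ n := by
        rw [hcard] at hc
        exact Nat.lt_succ_iff.mp (Finset.mem_range.mp hc)
      rw [hq c hcn f (Function.update w j (f ^ (n - c) * b)), Finset.smul_sum]
      refine Finset.sum_congr rfl fun S hS => ?_
      have hSc : S.card = c := (Finset.mem_powersetCard.mp hS).2
      rw [hG]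
      simp only [hSc]
    rw [Finset.sum_congr rfl hinner, hcard]
    have hrange : Finset.range (n + 1) = insert 0 (Finset.Icc 1 n) := by
      ext m
      simp only [Finset.mem_range, Finset.mem_insert, Finset.mem_Icc]
      omega
    rw [hrange, Finset.sum_insert (by simp)]
    congr 1
    rw [pow_zero, one_smul, hq 0 (Nat.zero_le n), Finset.powersetCard_zero,
      Finset.sum_singleton]
    simp
  rw [hsplit] at hzero
  exact eq_neg_of_add_eq_zero_left hzero

lemma extDelta_key
    (hq : ∀ (c : ℕ), c ≤ n → ∀ (f : F) (w : Fin n → F),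
      q c f * p1 w = ∑ S ∈ Finset.univ.powersetCard c,
        p1 fun i => (if i ∈ S then f else 1) * w i)
    (x y : Fin n → F) (j : Fin n) (f b : F) :
    extDelta p1 (Function.update x j (f ^ n * b)) y
      = - ∑ c ∈ Finset.Icc 1 n, (-1 : ℤ) ^ c •
          (q c f * extDelta p1 (Function.update x j (f ^ (n - c) * b)) y) := by
  classical
  have hup : ∀ (g : F) (σ : Equiv.Perm (Fin n)),
      (fun i => Function.update x j g i * y (σ i))
        = Function.update (fun i => x i * y (σ i)) j (g * y (σ j)) := fun g σ => by
    simpa using update_mul x j g (fun i => y (σ i))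
  have hD : ∀ (a : ℕ), extDelta p1 (Function.update x j (f ^ a * b)) y
      = ∑ σ : Equiv.Perm (Fin n), ((Equiv.Perm.sign σ : ℤ)) •
          p1 (Function.update (fun i => x i * y (σ i)) j (f ^ a * (b * y (σ j)))) := by
    intro a
    rw [extDelta_def]
    refine Finset.sum_congr rfl fun σ _ => ?_
    rw [hup, mul_assoc]
  calc extDelta p1 (Function.update x j (f ^ n * b)) y
      = ∑ σ : Equiv.Perm (Fin n), ((Equiv.Perm.sign σ : ℤ)) •
          (- ∑ c ∈ Finset.Icc 1 n, (-1 : ℤ) ^ c •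
            (q c f * p1 (Function.update (fun i => x i * y (σ i)) j
              (f ^ (n - c) * (b * y (σ j)))))) := by
        rw [hD n]
        refine Finset.sum_congr rfl fun σ _ => ?_
        rw [key2 p1 q hq j f (b * y (σ j))]
    _ = - ∑ σ : Equiv.Perm (Fin n), ∑ c ∈ Finset.Icc 1 n, ((Equiv.Perm.sign σ : ℤ)) •
          ((-1 : ℤ) ^ c • (q c f * p1 (Function.update (fun i => x i * y (σ i)) j
              (f ^ (n - c) * (b * y (σ j)))))) := by
        simp only [smul_neg, Finset.smul_sum]
        rw [Finset.sum_neg_distrib]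
    _ = - ∑ c ∈ Finset.Icc 1 n, (-1 : ℤ) ^ c •
          (q c f * extDelta p1 (Function.update x j (f ^ (n - c) * b)) y) := by
        rw [Finset.sum_comm]
        congr 1
        refine Finset.sum_congr rfl fun c _ => ?_
        rw [hD (n - c), Finset.mul_sum, Finset.smul_sum]
        refine Finset.sum_congr rfl fun σ _ => ?_
        rw [mul_smul_comm]
        exact smul_comm _ _ _

lemma extDelta_mem_step
    (hq : ∀ (c : ℕ), c ≤ n → ∀ (f : F) (w : Fin n → F),
      q c f * p1 w = ∑ S ∈ Finset.univ.powersetCard c,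
        p1 fun i => (if i ∈ S then f else 1) * w i)
    (I : Ideal Γn) (x y : Fin n → F) (j : Fin n) (f b : F) (hxj : x j = f ^ n * b)
    (h : ∀ c, 1 ≤ c → c ≤ n →
      extDelta p1 (Function.update x j (f ^ (n - c) * b)) y ∈ I) :
    extDelta p1 x y ∈ I := by
  classical
  have hx : x = Function.update x j (f ^ n * b) := by
    rw [← hxj, Function.update_eq_self]
  rw [hx, extDelta_key p1 q hq]
  refine neg_mem (Ideal.sum_mem _ fun c hc => ?_)
  obtain ⟨hc1, hc2⟩ := Finset.mem_Icc.mp hc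
  exact zsmul_mem (Ideal.mul_mem_left _ _ (h c hc1 hc2)) _

noncomputable def extDeltaML (y : Fin n → F) :
    MultilinearMap A (fun _ : Fin n => F) Γn where
  toFun x := extDelta p1 x y
  map_update_add' x j a b := by
    simp only [extDelta_def, update_mul, add_mul, MultilinearMap.map_update_add, smul_add,
      Finset.sum_add_distrib]
  map_update_smul' x j c a := by
    simp only [extDelta_def, update_mul, smul_mul_assoc, MultilinearMap.map_update_smul,
      Finset.smul_sum]
    exact Finset.sum_congr rfl fun σ _ => smul_comm _ _ _

lemma extDeltaML_apply (y x : Fin n → F) : extDeltaML p1 y x = extDelta p1 x y := rfl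

section Poly

open MvPolynomial

variable {r : ℕ}

lemma expand_mem (I : Ideal Γn)
    (D : MultilinearMap A (fun _ : Fin n => MvPolynomial (Fin r) A) Γn)
    (h : ∀ e : Fin n → (Fin r →₀ ℕ), D (fun i => monomial (e i) (1 : A)) ∈ I)
    (y : Fin n → MvPolynomial (Fin r) A) : D y ∈ I := by
  classical
  have hy : y = fun i => ∑ v ∈ (y i).support, coeff v (y i) • monomial v (1 : A) := by
    funext i
    conv_lhs => rw [(y i).as_sum]
    refine Finset.sum_congr rfl fun v _ => ?_
    rw [smul_monomial, smul_eq_mul, mul_one]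
  rw [hy, D.map_sum_finset (fun i v => coeff v (y i) • monomial v (1 : A))
    (fun i => (y i).support)]
  refine Ideal.sum_mem _ fun e _ => ?_
  rw [D.map_smul_univ, Algebra.smul_def]
  exact Ideal.mul_mem_left _ _ (h fun i => e i)

lemma big_step
    {q : ℕ → MvPolynomial (Fin r) A → Γn}
    {p1 : MultilinearMap A (fun _ : Fin n => MvPolynomial (Fin r) A) Γn}
    (hq : ∀ (c : ℕ), c ≤ n → ∀ (f : MvPolynomial (Fin r) A)
        (w : Fin n → MvPolynomial (Fin r) A),
      q c f * p1 w = ∑ S ∈ Finset.univ.powersetCard c,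
        p1 fun i => (if i ∈ S then f else 1) * w i)
    (I : Ideal Γn) (d : Fin n → (Fin r →₀ ℕ)) (y : Fin n → MvPolynomial (Fin r) A)
    (j : Fin n) (k : Fin r) (hjk : n ≤ d j k)
    (h : ∀ c, 1 ≤ c → c ≤ n →
      extDelta p1 (fun i => monomial
        (Function.update d j ((d j - Finsupp.single k n) + Finsupp.single k (n - c)) i)
        (1 : A)) y ∈ I) :
    extDelta p1 (fun i => monomial (d i) (1 : A)) y ∈ I := by
  classical
  set d' : Fin r →₀ ℕ := d j - Finsupp.single k n with hd'
  have hle : Finsupp.single k n ≤ d j := Finsupp.single_le_iff.mpr hjk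
  have hdj : d' + Finsupp.single k n = d j := tsub_add_cancel_of_le hle
  have hmon : ∀ a : ℕ,
      (X k : MvPolynomial (Fin r) A) ^ a * monomial d' 1
        = monomial (d' + Finsupp.single k a) 1 := by
    intro a
    rw [X_pow_eq_monomial, monomial_mul, one_mul, add_comm]
  refine extDelta_mem_step p1 q hq I _ y j (X k) (monomial d' 1) ?_ ?_
  · show monomial (d j) (1 : A) = _
    rw [hmon n, hdj]
  · intro c hc1 hc2
    have hupd : Function.update (fun i => monomial (d i) (1 : A)) j
          ((X k : MvPolynomial (Fin r) A) ^ (n - c) * monomial d' 1)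
        = fun i => monomial (Function.update d j (d' + Finsupp.single k (n - c)) i) 1 := by
      funext i
      rcases eq_or_ne i j with rfl | hij
      · rw [Function.update_self, Function.update_self, hmon]
      · rw [Function.update_of_ne hij, Function.update_of_ne hij]
    rw [hupd]
    exact h c hc1 hc2

lemma main0
    {q : ℕ → MvPolynomial (Fin r) A → Γn}
    {p1 : MultilinearMap A (fun _ : Fin n => MvPolynomial (Fin r) A) Γn}
    (hsym : ∀ (σ : Equiv.Perm (Fin n)) (z : Fin n → MvPolynomial (Fin r) A),
      p1 (z ∘ σ) = p1 z)
    (hq : ∀ (c : ℕ), c ≤ n → ∀ (f : MvPolynomial (Fin r) A)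
        (w : Fin n → MvPolynomial (Fin r) A),
      q c f * p1 w = ∑ S ∈ Finset.univ.powersetCard c,
        p1 fun i => (if i ∈ S then f else 1) * w i)
    (I : Ideal Γn)
    (hgen : ∀ d e : Fin n → (Fin r →₀ ℕ), (∀ i k, d i k < n) → (∀ i k, e i k < n) →
      extDelta p1 (fun i => monomial (d i) (1 : A)) (fun i => monomial (e i) (1 : A)) ∈ I)
    (d e : Fin n → (Fin r →₀ ℕ)) :
    extDelta p1 (fun i => monomial (d i) (1 : A)) (fun i => monomial (e i) (1 : A)) ∈ I := by
  classical
  set Deg : (Fin r →₀ ℕ) → ℕ := fun v => ∑ k : Fin r, v k with hDeg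
  have hDegAdd : ∀ u v : Fin r →₀ ℕ, Deg (u + v) = Deg u + Deg v := by
    intro u v
    simp [hDeg, Finset.sum_add_distrib]
  have hDegSingle : ∀ (k : Fin r) (a : ℕ), Deg (Finsupp.single k a) = a := by
    intro k a
    simp [hDeg, Finsupp.single_apply]
  have hSum : ∀ (d : Fin n → (Fin r →₀ ℕ)) (j : Fin n) (v : Fin r →₀ ℕ),
      (∑ i, Deg (Function.update d j v i)) + Deg (d j) = (∑ i, Deg (d i)) + Deg v := by
    intro d j v
    have h1 : (fun i => Deg (Function.update d j v i))
        = Function.update (fun i => Deg (d i)) j (Deg v) := by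
      funext i
      rcases eq_or_ne i j with rfl | hij
      · rw [Function.update_self, Function.update_self]
      · rw [Function.update_of_ne hij, Function.update_of_ne hij]
    rw [h1, Finset.sum_update_of_mem (Finset.mem_univ j), Finset.sdiff_singleton_eq_erase,
      ← Finset.sum_erase_add Finset.univ _ (Finset.mem_univ j)]
    omega
  suffices H : ∀ N (d e : Fin n → (Fin r →₀ ℕ)),
      ((∑ i, Deg (d i)) + ∑ i, Deg (e i)) ≤ N →
      extDelta p1 (fun i => monomial (d i) (1 : A)) (fun i => monomial (e i) (1 : A)) ∈ I by
    exact H _ d e le_rfl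
  intro N
  induction N using Nat.strong_induction_on with
  | _ N IH =>
  intro d e hN
  by_cases hd : ∀ i k, d i k < n
  · by_cases he : ∀ i k, e i k < n
    · exact hgen d e hd he
    · push_neg at he
      obtain ⟨j, k, hjk⟩ := he
      rw [extDelta_comm p1 hsym]
      refine big_step hq I e _ j k hjk fun c hc1 hc2 => ?_
      set e' : Fin r →₀ ℕ := e j - Finsupp.single k n with he'
      have hej : e' + Finsupp.single k n = e j :=
        tsub_add_cancel_of_le (Finsupp.single_le_iff.mpr hjk)
      have hkey : (∑ i, Deg (Function.update e j (e' + Finsupp.single k (n - c)) i)) + c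
          = ∑ i, Deg (e i) := by
        have h1 := hSum e j (e' + Finsupp.single k (n - c))
        have h2 : Deg (e j) = Deg e' + n := by rw [← hej, hDegAdd, hDegSingle]
        have h3 : Deg (e' + Finsupp.single k (n - c)) = Deg e' + (n - c) := by
          rw [hDegAdd, hDegSingle]
        omega
      exact IH ((∑ i, Deg (Function.update e j
          (e' + Finsupp.single k (n - c)) i)) + ∑ i, Deg (d i)) (by omega) _ _ le_rfl
  · push_neg at hd
    obtain ⟨j, k, hjk⟩ := hd
    refine big_step hq I d _ j k hjk fun c hc1 hc2 => ?_
    set d2 : Fin r →₀ ℕ := d j - Finsupp.single k n with hd2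
    have hdj : d2 + Finsupp.single k n = d j :=
      tsub_add_cancel_of_le (Finsupp.single_le_iff.mpr hjk)
    have hkey : (∑ i, Deg (Function.update d j (d2 + Finsupp.single k (n - c)) i)) + c
        = ∑ i, Deg (d i) := by
      have h1 := hSum d j (d2 + Finsupp.single k (n - c))
      have h2 : Deg (d j) = Deg d2 + n := by rw [← hdj, hDegAdd, hDegSingle]
      have h3 : Deg (d2 + Finsupp.single k (n - c)) = Deg d2 + (n - c) := by
        rw [hDegAdd, hDegSingle]
      omega
    exact IH ((∑ i, Deg (Function.update d j (d2 + Finsupp.single k (n - c)) i))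
        + ∑ i, Deg (e i)) (by omega) _ _ le_rfl

end Poly

end NormAux

/-- **Lemma 2.7 (first part).**  Let `F = A[T₁,…,T_r]` and let `V ⊂ F` be the `A`-module
spanned by the monomials whose degree in each individual variable is less than `n`.  Then
`I_V = I_F` in `Γⁿ_A(F)`.

Setup: `Γn` is `Γⁿ_A(F)` with its internal multiplication, `p1` the external product of
`n` degree-one divided powers (symmetric, `hsym`), `q c f = γᶜ(f) * γ^{n-c}(1)`, and `hq`
the Proposition 1.7 expansion of internal products `q c f ⋅ p1 w` used in the proof. -/
theorem normIdeal_small_monomials {A Γn : Type*} [CommRing A]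
    [CommRing Γn] [Algebra A Γn] {n : ℕ} (r : ℕ)
    (p1 : MultilinearMap A (fun _ : Fin n => MvPolynomial (Fin r) A) Γn)
    (hsym : ∀ (σ : Equiv.Perm (Fin n)) (z : Fin n → MvPolynomial (Fin r) A),
      p1 (z ∘ σ) = p1 z)
    (q : ℕ → MvPolynomial (Fin r) A → Γn)
    (hq : ∀ (c : ℕ), c ≤ n → ∀ (f : MvPolynomial (Fin r) A) (w : Fin n → MvPolynomial (Fin r) A),
      q c f * p1 w =
        ∑ S ∈ Finset.univ.powersetCard c,
          p1 fun i => (if i ∈ S then f else 1) * w i) :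
    normIdeal p1 (Submodule.span A
        {m : MvPolynomial (Fin r) A |
          ∃ d : Fin r →₀ ℕ, (∀ i, d i < n) ∧ m = MvPolynomial.monomial d 1}) =
      normIdeal p1 (⊤ : Submodule A (MvPolynomial (Fin r) A)) := by
  classical
  set V : Submodule A (MvPolynomial (Fin r) A) := Submodule.span A
      {m : MvPolynomial (Fin r) A |
        ∃ d : Fin r →₀ ℕ, (∀ i, d i < n) ∧ m = MvPolynomial.monomial d 1} with hV
  have hgen : ∀ d e : Fin n → (Fin r →₀ ℕ), (∀ i k, d i k < n) → (∀ i k, e i k < n) →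
      extDelta p1 (fun i => MvPolynomial.monomial (d i) (1 : A))
        (fun i => MvPolynomial.monomial (e i) (1 : A)) ∈ normIdeal p1 V := by
    intro d e hd he
    exact Ideal.subset_span ⟨_, _,
      fun i => Submodule.subset_span ⟨d i, fun k => hd i k, rfl⟩,
      fun i => Submodule.subset_span ⟨e i, fun k => he i k, rfl⟩, rfl⟩
  have main1 : ∀ (d : Fin n → (Fin r →₀ ℕ)) (y : Fin n → MvPolynomial (Fin r) A),
      extDelta p1 (fun i => MvPolynomial.monomial (d i) (1 : A)) y ∈ normIdeal p1 V := by
    intro d y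
    rw [NormAux.extDelta_comm p1 hsym, ← NormAux.extDeltaML_apply]
    exact NormAux.expand_mem _ _
      (fun e => NormAux.main0 hsym hq _ hgen e d) y
  have main2 : ∀ (x y : Fin n → MvPolynomial (Fin r) A),
      extDelta p1 x y ∈ normIdeal p1 V := by
    intro x y
    rw [← NormAux.extDeltaML_apply]
    exact NormAux.expand_mem _ _ (fun d => main1 d y) x
  apply le_antisymm
  · refine Ideal.span_mono fun t => ?_
    rintro ⟨x, y, _, _, rfl⟩
    exact ⟨x, y, fun i => trivial, fun i => trivial, rfl⟩
  · rw [normIdeal, Ideal.span_le]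
    rintro t ⟨x, y, -, -, rfl⟩
    exact main2 x y
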